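/- For every real number x, the hyperbolic cosine admits the infinite product expansion cosh(x) = ∏_{m=1}^∞ (1 + 4x²/(π²(2m−1)²)); in particular the family (1 + 4x²/(π²(2m−1)²))_{m≥1} is multipliable. -/

import Mathlib

open Real

private lemma prod_range_two_mul_aux {M : Type*} [CommMonoid M] (g : ℕ → M) (n : ℕ) :
    ∏ j ∈ Finset.range (2 * n), g j = ∏ m ∈ Finset.range n, (g (2 * m) * g (2 * m + 1)) := by
  induction n with
  | zero => simp
  | succ n ih =>
    rw [show 2 * (n + 1) = (2 * n + 1) + 1 by ring, Finset.prod_range_succ,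
      Finset.prod_range_succ, ih, Finset.prod_range_succ, mul_assoc]

private lemma tendsto_partial_prod (x : ℝ) (hx : x ≠ 0) :
    Filter.Tendsto (fun n : ℕ => ∏ m ∈ Finset.range n,
      (1 + 4 * x ^ 2 / (π ^ 2 * (2 * (m : ℝ) + 1) ^ 2))) Filter.atTop (nhds (Real.cosh x)) := by
  set c : ℂ := (x : ℂ) with hcdef
  have hc : c ≠ 0 := Complex.ofReal_ne_zero.mpr hx
  have hπ : (π : ℂ) ≠ 0 := Complex.ofReal_ne_zero.mpr Real.pi_ne_zero
  set G : ℕ → ℂ := fun j => 1 + 4 * c ^ 2 / ((π : ℂ) ^ 2 * ((j : ℂ) + 1) ^ 2) with hG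
  set H : ℕ → ℂ := fun m => 1 + c ^ 2 / ((π : ℂ) ^ 2 * ((m : ℂ) + 1) ^ 2) with hH
  set F : ℕ → ℂ := fun m => 1 + 4 * c ^ 2 / ((π : ℂ) ^ 2 * (2 * (m : ℂ) + 1) ^ 2) with hF
  -- Euler product for sinh(2x)
  have h2 : Filter.Tendsto (fun n : ℕ => 2 * c * Complex.I * ∏ j ∈ Finset.range n, G j)
      Filter.atTop (nhds (Complex.sinh (2 * c) * Complex.I)) := by
    have := Complex.tendsto_euler_sin_prod (2 * c * Complex.I / π)
    rw [show (π : ℂ) * (2 * c * Complex.I / π) = 2 * c * Complex.I by field_simp,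
      Complex.sin_mul_I] at this
    refine this.congr fun n => ?_
    congr 1
    refine Finset.prod_congr rfl fun j _ => ?_
    rw [hG]
    have : ((j : ℂ) + 1) ^ 2 ≠ 0 := by
      intro h
      have := pow_eq_zero_iff (n := 2) (by norm_num) |>.mp h
      exact_mod_cast (Nat.cast_add_one_ne_zero j : ((j : ℂ) + 1) ≠ 0) this
    field_simp
    ring_nf
    simp [Complex.I_sq]
  -- Euler product for sinh(x)
  have h1 : Filter.Tendsto (fun n : ℕ => c * Complex.I * ∏ m ∈ Finset.range n, H m)
      Filter.atTop (nhds (Complex.sinh c * Complex.I)) := by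
    have := Complex.tendsto_euler_sin_prod (c * Complex.I / π)
    rw [show (π : ℂ) * (c * Complex.I / π) = c * Complex.I by field_simp,
      Complex.sin_mul_I] at this
    refine this.congr fun n => ?_
    congr 1
    refine Finset.prod_congr rfl fun j _ => ?_
    rw [hH]
    have : ((j : ℂ) + 1) ^ 2 ≠ 0 := by
      intro h
      have := pow_eq_zero_iff (n := 2) (by norm_num) |>.mp h
      exact_mod_cast (Nat.cast_add_one_ne_zero j : ((j : ℂ) + 1) ≠ 0) this
    field_simp
    ring_nf
    simp [Complex.I_sq]
  -- nonvanishing of H factors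
  have hHpos : ∀ m : ℕ, H m = ((1 + x ^ 2 / (π ^ 2 * ((m : ℝ) + 1) ^ 2) : ℝ) : ℂ) := by
    intro m; rw [hH]; push_cast; ring
  have hHne : ∀ m : ℕ, H m ≠ 0 := by
    intro m
    rw [hHpos m]
    exact_mod_cast (by positivity : (0:ℝ) < 1 + x ^ 2 / (π ^ 2 * ((m : ℝ) + 1) ^ 2)).ne'
  -- compose h2 with n ↦ 2n
  have h2n : Filter.Tendsto (fun n : ℕ => 2 * c * Complex.I * ∏ j ∈ Finset.range (2 * n), G j)
      Filter.atTop (nhds (Complex.sinh (2 * c) * Complex.I)) :=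
    h2.comp (Filter.tendsto_atTop_atTop.mpr fun b => ⟨b, fun a ha => by omega⟩)
  have hsinh : Complex.sinh c * Complex.I ≠ 0 := by
    apply mul_ne_zero _ Complex.I_ne_zero
    rw [hcdef, ← Complex.ofReal_sinh, Complex.ofReal_ne_zero]
    intro h
    exact hx (Real.sinh_injective (by simpa using h))
  have hdiv := h2n.div h1 hsinh
  -- identify the quotient with 2 * partial products of F
  have hquot : ∀ n : ℕ,
      (2 * c * Complex.I * ∏ j ∈ Finset.range (2 * n), G j) /
        (c * Complex.I * ∏ m ∈ Finset.range n, H m) = 2 * ∏ m ∈ Finset.range n, F m := by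
    intro n
    have hsplit : ∏ j ∈ Finset.range (2 * n), G j =
        (∏ m ∈ Finset.range n, F m) * ∏ m ∈ Finset.range n, H m := by
      rw [prod_range_two_mul_aux, ← Finset.prod_mul_distrib]
      refine Finset.prod_congr rfl fun m _ => ?_
      congr 1
      · rw [hG, hF]; push_cast; ring
      · rw [hG, hH]
        have h2 : ((m : ℂ) + 1) ≠ 0 := Nat.cast_add_one_ne_zero m
        push_cast
        congr 1
        rw [show (2 * (m : ℂ) + 1 + 1) = 2 * ((m : ℂ) + 1) by ring, mul_pow]
        field_simp
        ring
    rw [hsplit]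
    have hP : (∏ m ∈ Finset.range n, H m) ≠ 0 := Finset.prod_ne_zero_iff.mpr fun m _ => hHne m
    field_simp
  rw [show Complex.sinh (2 * c) * Complex.I / (Complex.sinh c * Complex.I) = 2 * Complex.cosh c by
      rw [Complex.sinh_two_mul]
      have : Complex.sinh c ≠ 0 := fun h => hsinh (by rw [h]; ring)
      field_simp] at hdiv
  have hdiv2 : Filter.Tendsto (fun n : ℕ => 2 * ∏ m ∈ Finset.range n, F m)
      Filter.atTop (nhds (2 * Complex.cosh c)) := hdiv.congr hquot
  have hF2 : Filter.Tendsto (fun n : ℕ => ∏ m ∈ Finset.range n, F m)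
      Filter.atTop (nhds (Complex.cosh c)) := by
    have := hdiv2.const_mul (2⁻¹ : ℂ)
    simp only [← mul_assoc] at this
    norm_num at this
    exact this
  -- descend to ℝ
  rw [← Filter.tendsto_ofReal_iff, show ((Real.cosh x : ℝ) : ℂ) = Complex.cosh c from
    Complex.ofReal_cosh x]
  refine hF2.congr fun n => ?_
  rw [hF]
  push_cast
  rfl

theorem cosh_eq_tprod_one_add_sq (x : ℝ) :
    Multipliable (fun m : ℕ => 1 + 4 * x ^ 2 / (π ^ 2 * (2 * (m : ℝ) + 1) ^ 2)) ∧
      Real.cosh x = ∏' m : ℕ, (1 + 4 * x ^ 2 / (π ^ 2 * (2 * (m : ℝ) + 1) ^ 2)) := by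
  by_cases hx : x = 0
  · subst hx
    simp only [ne_eq, OfNat.ofNat_ne_zero, not_false_eq_true, zero_pow, mul_zero, zero_div,
      add_zero]
    exact ⟨multipliable_one, by simp [Real.cosh_zero]⟩
  · have hbase : Summable (fun m : ℕ => (1 : ℝ) / ((m : ℝ) + 1) ^ 2) := by
      have h := (summable_nat_add_iff 1).mpr (Real.summable_one_div_nat_pow.mpr one_lt_two)
      refine h.congr fun m => ?_
      push_cast
      ring
    have ha : Summable (fun m : ℕ => 4 * x ^ 2 / (π ^ 2 * (2 * (m : ℝ) + 1) ^ 2)) := by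
      refine Summable.of_nonneg_of_le (fun m => by positivity) (fun m => ?_)
        (hbase.mul_left (4 * x ^ 2 / π ^ 2))
      rw [div_mul_div_comm, mul_one]
      apply div_le_div_of_nonneg_left (by positivity) (by positivity)
      have h1 : ((m : ℝ) + 1) ^ 2 ≤ (2 * (m : ℝ) + 1) ^ 2 := by
        apply pow_le_pow_left₀ (by positivity)
        have : (0 : ℝ) ≤ (m : ℝ) := Nat.cast_nonneg m
        linarith
      nlinarith [Real.pi_pos, sq_nonneg ((m : ℝ) + 1)]
    have hpos : ∀ m : ℕ, 0 < 1 + 4 * x ^ 2 / (π ^ 2 * (2 * (m : ℝ) + 1) ^ 2) := fun m => by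
      positivity
    have hlog : Summable (fun m : ℕ =>
        Real.log (1 + 4 * x ^ 2 / (π ^ 2 * (2 * (m : ℝ) + 1) ^ 2))) := by
      refine Summable.of_nonneg_of_le (fun m => Real.log_nonneg (le_add_of_nonneg_right (by positivity))) (fun m => ?_) ha
      calc Real.log (1 + 4 * x ^ 2 / (π ^ 2 * (2 * (m : ℝ) + 1) ^ 2))
          ≤ 1 + 4 * x ^ 2 / (π ^ 2 * (2 * (m : ℝ) + 1) ^ 2) - 1 :=
            Real.log_le_sub_one_of_pos (hpos m)
        _ = 4 * x ^ 2 / (π ^ 2 * (2 * (m : ℝ) + 1) ^ 2) := by ring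
    have hM : Multipliable (fun m : ℕ => 1 + 4 * x ^ 2 / (π ^ 2 * (2 * (m : ℝ) + 1) ^ 2)) :=
      Real.multipliable_of_summable_log hpos hlog
    exact ⟨hM, tendsto_nhds_unique (tendsto_partial_prod x hx) hM.hasProd.tendsto_prod_nat⟩
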